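/- arXiv:2410.06150 — 2 statements merged into one kernel-verified Lean document; each statement's English description precedes it below -/
import Mathlib

section
/- Let e : [a, b] → ℝ be a continuous function such that for every probability density g on [a, b] (with respect to Lebesgue measure, strictly positive) and every f ∈ [a, b), the equality e( (∫_{f}^{b} z·g(z) dz)/(∫_{f}^{b} g(z) dz) ) · ∫_{f}^{b} g(z) dz = ∫_{f}^{b} e(z)·g(z) dz holds. Then e is affine on [a, b]. -/
set_option maxHeartbeats 1000000


theorem stmt1 (a b : ℝ) (hab : a < b) (e : ℝ → ℝ)
    (he : ContinuousOn e (Set.Icc a b))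
    (h : ∀ g : ℝ → ℝ, Continuous g → (∀ x ∈ Set.Icc a b, 0 < g x) →
      (∫ x in a..b, g x) = 1 →
      ∀ f ∈ Set.Ico a b,
        e ((∫ z in f..b, z * g z) / (∫ z in f..b, g z)) * (∫ z in f..b, g z)
          = ∫ z in f..b, e z * g z) :
    ∃ c₁ c₂ : ℝ, ∀ x ∈ Set.Icc a b, e x = c₁ * x + c₂ := by
  have hab' : b - a ≠ 0 := sub_ne_zero.2 hab.ne'
  -- continuous extension of e to ℝ
  set E : ℝ → ℝ := fun x => e (max a (min x b)) with hEdef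
  have hEcont : Continuous E := by
    apply he.comp_continuous
    · exact continuous_const.max (continuous_id.min continuous_const)
    · intro x
      exact ⟨le_max_left _ _, max_le hab.le (min_le_right _ _)⟩
  have hEeq : ∀ x ∈ Set.Icc a b, E x = e x := by
    intro x hx
    simp only [hEdef]
    rw [min_eq_left hx.2, max_eq_right hx.1]
  set G : ℝ → ℝ := fun f => ∫ z in f..b, E z with hGdef
  set A : ℝ → ℝ := fun f => ∫ z in f..b, z * E z with hAdef
  set c : ℝ → ℝ := fun f => 12 * (A f - (f + b) / 2 * G f) / (b - f) ^ 3 with hcdef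
  -- congruence between e and E inside integrals
  have hcong : ∀ f ∈ Set.Ico a b, ∀ g : ℝ → ℝ,
      (∫ z in f..b, e z * g z) = ∫ z in f..b, E z * g z := by
    intro f hf g
    apply intervalIntegral.integral_congr
    intro z hz
    rw [Set.uIcc_of_le hf.2.le] at hz
    simp only
    rw [hEeq z ⟨le_trans hf.1 hz.1, hz.2⟩]
  -- constant density identity
  have hconstId : ∀ f ∈ Set.Ico a b, E ((f + b) / 2) * (b - f) = G f := by
    intro f hf
    have hr : b - f ≠ 0 := sub_ne_zero.2 hf.2.ne'
    have h1 := h (fun _ => (b - a)⁻¹) continuous_const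
      (fun x _ => inv_pos.2 (by linarith))
      (by rw [intervalIntegral.integral_const, smul_eq_mul, mul_inv_cancel₀ hab'])
      f hf
    rw [hcong f hf] at h1
    have e1 : (∫ z in f..b, z * (b - a)⁻¹) = (b ^ 2 - f ^ 2) / 2 * (b - a)⁻¹ := by
      rw [intervalIntegral.integral_mul_const, integral_id]
    have e2 : (∫ z in f..b, (b - a)⁻¹) = (b - f) * (b - a)⁻¹ := by
      rw [intervalIntegral.integral_const, smul_eq_mul]
    have e3 : (∫ z in f..b, E z * (b - a)⁻¹) = G f * (b - a)⁻¹ := by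
      rw [intervalIntegral.integral_mul_const, hGdef]
    rw [e1, e2, e3] at h1
    have e4 : (b ^ 2 - f ^ 2) / 2 * (b - a)⁻¹ / ((b - f) * (b - a)⁻¹) = (f + b) / 2 := by
      field_simp
      ring
    rw [e4] at h1
    have hEe : E ((f + b) / 2) = e ((f + b) / 2) :=
      hEeq _ ⟨by linarith [hf.1], by linarith [hf.2]⟩
    rw [← hEe] at h1
    field_simp at h1
    linarith [h1]
  -- linear density identity
  have hlinId : ∀ f ∈ Set.Ico a b, ∀ d : ℝ, (d < a ∨ b < d) →
      ((b ^ 2 - f ^ 2) / 2 - d * (b - f)) ≠ 0 →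
      e (((b ^ 3 - f ^ 3) / 3 - d * ((b ^ 2 - f ^ 2) / 2)) /
          ((b ^ 2 - f ^ 2) / 2 - d * (b - f))) * ((b ^ 2 - f ^ 2) / 2 - d * (b - f))
        = A f - d * G f := by
    intro f hf d hd hD
    set K : ℝ := (b ^ 2 - a ^ 2) / 2 - d * (b - a) with hKdef
    have hKalt : K = (b - a) * ((a + b) / 2 - d) := by rw [hKdef]; ring
    have hKsgn : (d < a → 0 < K) ∧ (b < d → K < 0) := by
      constructor
      · intro hd'
        rw [hKalt]
        exact mul_pos (by linarith) (by linarith)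
      · intro hd'
        rw [hKalt]
        exact mul_neg_of_pos_of_neg (by linarith) (by linarith)
    have hK : K ≠ 0 := by
      rcases hd with hd' | hd'
      · exact (hKsgn.1 hd').ne'
      · exact (hKsgn.2 hd').ne
    have hgpos : ∀ x ∈ Set.Icc a b, 0 < (x - d) / K := by
      intro x hx
      rcases hd with hd' | hd'
      · exact div_pos (by linarith [hx.1]) (hKsgn.1 hd')
      · exact div_pos_of_neg_of_neg (by linarith [hx.2]) (hKsgn.2 hd')
    have hgcont : Continuous (fun z : ℝ => (z - d) / K) :=
      (continuous_id.sub continuous_const).div_const K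
    have hIid : ∀ u v : ℝ, IntervalIntegrable (fun z : ℝ => z) MeasureTheory.volume u v :=
      fun u v => continuous_id.intervalIntegrable u v
    have hsubint : ∀ u v : ℝ, (∫ z in u..v, (z - d)) = (v ^ 2 - u ^ 2) / 2 - d * (v - u) := by
      intro u v
      rw [intervalIntegral.integral_sub (hIid u v) (continuous_const.intervalIntegrable u v),
        integral_id, intervalIntegral.integral_const, smul_eq_mul]
      ring
    have hgnorm : (∫ x in a..b, (x - d) / K) = 1 := by
      rw [intervalIntegral.integral_div, hsubint a b, ← hKdef, div_self hK]
    have h1 := h (fun z => (z - d) / K) hgcont hgpos hgnorm f hf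
    rw [hcong f hf] at h1
    have i2 : (∫ z in f..b, (z - d) / K) = ((b ^ 2 - f ^ 2) / 2 - d * (b - f)) / K := by
      rw [intervalIntegral.integral_div, hsubint f b]
    have i1 : (∫ z in f..b, z * ((z - d) / K))
        = ((b ^ 3 - f ^ 3) / 3 - d * ((b ^ 2 - f ^ 2) / 2)) / K := by
      have e1 : (∫ z in f..b, z * ((z - d) / K)) = ∫ z in f..b, (z ^ 2 - d * z) / K := by
        apply intervalIntegral.integral_congr
        intro z _
        simp only
        field_simp
      rw [e1, intervalIntegral.integral_div,
        intervalIntegral.integral_sub (g := fun x => d * x) ((continuous_pow 2).intervalIntegrable f b)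
          ((continuous_const.mul continuous_id' : Continuous fun z : ℝ => d * z).intervalIntegrable f b),
        integral_pow, intervalIntegral.integral_const_mul, integral_id]
      norm_num
    have i3 : (∫ z in f..b, E z * ((z - d) / K)) = (A f - d * G f) / K := by
      have e1 : (∫ z in f..b, E z * ((z - d) / K)) = ∫ z in f..b, (z * E z - d * E z) / K := by
        apply intervalIntegral.integral_congr
        intro z _
        simp only
        field_simp
      rw [e1, intervalIntegral.integral_div,
        intervalIntegral.integral_sub (f := fun x => x * E x) (g := fun x => d * E x) ((continuous_id'.mul hEcont : Continuous fun z => z * E z).intervalIntegrable f b)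
          ((continuous_const.mul hEcont : Continuous fun z => d * E z).intervalIntegrable f b),
        intervalIntegral.integral_const_mul, hGdef, hAdef]
    rw [i1, i2, i3] at h1
    have harg : ((b ^ 3 - f ^ 3) / 3 - d * ((b ^ 2 - f ^ 2) / 2)) / K /
        (((b ^ 2 - f ^ 2) / 2 - d * (b - f)) / K)
        = ((b ^ 3 - f ^ 3) / 3 - d * ((b ^ 2 - f ^ 2) / 2)) /
          ((b ^ 2 - f ^ 2) / 2 - d * (b - f)) :=
      div_div_div_cancel_right₀ hK _ _
    rw [harg] at h1
    have h2 := congrArg (fun t => t * K) h1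
    rw [div_mul_cancel₀ _ hK, mul_assoc, div_mul_cancel₀ _ hK] at h2
    exact h2
  -- key local affine identity
  have hkey : ∀ f ∈ Set.Ico a b, ∀ s : ℝ, |s| < (b - f) ^ 2 / (6 * (f + b - 2 * a)) →
      E ((f + b) / 2 + s) = G f / (b - f) + c f * s := by
    intro f hf s hs
    have hfa : a ≤ f := hf.1
    have hfb : f < b := hf.2
    have hr : (0:ℝ) < b - f := by linarith
    have hden : (0:ℝ) < f + b - 2 * a := by linarith
    have hd6 : (0:ℝ) < (b - f) ^ 2 / (6 * (f + b - 2 * a)) := by positivity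
    rcases eq_or_ne s 0 with rfl | hs0
    · have h1 := hconstId f hf
      rw [add_zero, mul_zero, add_zero, eq_div_iff hr.ne']
      exact h1
    · set d : ℝ := (f + b) / 2 - (b - f) ^ 2 / (12 * s) with hddef
      have hsd : s * (6 * (f + b - 2 * a)) < (b - f) ^ 2 := by
        have h1 : s ≤ |s| := le_abs_self s
        have h2 : |s| * (6 * (f + b - 2 * a)) < (b - f) ^ 2 := by
          rw [← lt_div_iff₀ (by positivity)]
          exact hs
        nlinarith [abs_nonneg s]
      have hsd2 : -(b - f) < 6 * s := by
        have h1 : -s ≤ |s| := by linarith [neg_abs_le s]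
        have h3 : (b - f) ^ 2 / (6 * (f + b - 2 * a)) ≤ (b - f) / 6 := by
          rw [div_le_div_iff₀ (by positivity) (by norm_num)]
          nlinarith
        nlinarith [lt_of_lt_of_le hs h3]
      have hd : d < a ∨ b < d := by
        rcases lt_or_gt_of_ne hs0 with hneg | hpos
        · right
          rw [hddef]
          have : (b - f) ^ 2 / (12 * s) < -(b - f) / 2 := by
            rw [div_lt_iff_of_neg (by linarith)]
            nlinarith
          linarith
        · left
          rw [hddef]
          have : (f + b - 2 * a) / 2 < (b - f) ^ 2 / (12 * s) := by
            rw [div_lt_div_iff₀ (by norm_num) (by linarith)]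
            nlinarith
          linarith
      have hD0 : (b ^ 2 - f ^ 2) / 2 - d * (b - f) = (b - f) ^ 3 / (12 * s) := by
        rw [hddef]
        field_simp
        ring
      have hDne : (b ^ 2 - f ^ 2) / 2 - d * (b - f) ≠ 0 := by
        rw [hD0]
        exact div_ne_zero (pow_ne_zero _ hr.ne') (by simpa using hs0)
      have hM : ((b ^ 3 - f ^ 3) / 3 - d * ((b ^ 2 - f ^ 2) / 2)) /
          ((b ^ 2 - f ^ 2) / 2 - d * (b - f)) = (f + b) / 2 + s := by
        rw [div_eq_iff hDne, hD0, hddef]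
        field_simp
        ring
      have hmem : (f + b) / 2 + s ∈ Set.Icc a b := by
        constructor
        · nlinarith [hsd2]
        · nlinarith [hsd]
      have h1 := hlinId f hf d hd hDne
      rw [hM, ← hEeq _ hmem, hD0, hddef] at h1
      rw [hcdef]
      simp only
      set EV : ℝ := E ((f + b) / 2 + s) with hEV
      field_simp at h1
      ring_nf at h1
      have h2 : s * (EV * (b - f) ^ 3 * 24) =
          s * ((G f * (b - f) ^ 2 + 12 * s * (A f - (f + b) / 2 * G f)) * 24) := by
        linear_combination (12 * s) * h1
      have h3 := mul_left_cancel₀ hs0 h2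
      have h4 : G f / (b - f) + 12 * (A f - (f + b) / 2 * G f) / (b - f) ^ 3 * s
          = (G f * (b - f) ^ 2 + 12 * s * (A f - (f + b) / 2 * G f)) / (b - f) ^ 3 := by
        field_simp
      rw [h4, eq_div_iff (pow_ne_zero 3 hr.ne')]
      linear_combination h3 / 24
  -- derivatives of G and A
  have hGderiv : ∀ f : ℝ, HasDerivAt G (-(E f)) f := by
    intro f
    have h1 : ∀ u : ℝ, G u = (∫ z in a..b, E z) - ∫ z in a..u, E z := by
      intro u
      have := intervalIntegral.integral_add_adjacent_intervals
        (hEcont.intervalIntegrable (μ := MeasureTheory.volume) a u) (hEcont.intervalIntegrable u b)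
      rw [hGdef]
      simp only
      linarith [this]
    have h2 : HasDerivAt (fun u => (∫ z in a..b, E z) - ∫ z in a..u, E z) (0 - E f) f := by
      apply HasDerivAt.sub (hasDerivAt_const f _)
      exact intervalIntegral.integral_hasDerivAt_right (hEcont.intervalIntegrable a f)
        (hEcont.stronglyMeasurableAtFilter _ _) hEcont.continuousAt
    have h3 : HasDerivAt (fun u => (∫ z in a..b, E z) - ∫ z in a..u, E z) (-(E f)) f := by
      simpa using h2
    exact h3.congr_of_eventuallyEq (Filter.Eventually.of_forall h1)
  have hAderiv : ∀ f : ℝ, HasDerivAt A (-(f * E f)) f := by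
    intro f
    have hcontA : Continuous fun z : ℝ => z * E z := continuous_id'.mul hEcont
    have h1 : ∀ u : ℝ, A u = (∫ z in a..b, z * E z) - ∫ z in a..u, z * E z := by
      intro u
      have := intervalIntegral.integral_add_adjacent_intervals
        (hcontA.intervalIntegrable (μ := MeasureTheory.volume) a u) (hcontA.intervalIntegrable u b)
      rw [hAdef]
      simp only
      linarith [this]
    have h2 : HasDerivAt (fun u => (∫ z in a..b, z * E z) - ∫ z in a..u, z * E z)
        (0 - f * E f) f := by
      apply HasDerivAt.sub (hasDerivAt_const f _)
      exact intervalIntegral.integral_hasDerivAt_right (hcontA.intervalIntegrable a f)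
        (hcontA.stronglyMeasurableAtFilter _ _) hcontA.continuousAt
    have h3 : HasDerivAt (fun u => (∫ z in a..b, z * E z) - ∫ z in a..u, z * E z)
        (-(f * E f)) f := by
      simpa using h2
    exact h3.congr_of_eventuallyEq (Filter.Eventually.of_forall h1)
  -- E is differentiable at midpoints
  have hEd : ∀ f ∈ Set.Ico a b, HasDerivAt E (c f) ((f + b) / 2) := by
    intro f hf
    have hδ : (0:ℝ) < (b - f) ^ 2 / (6 * (f + b - 2 * a)) := by
      have h1 : f < b := hf.2
      have h2 : a ≤ f := hf.1
      have h3 : (0:ℝ) < b - f := by linarith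
      have h4 : (0:ℝ) < 6 * (f + b - 2 * a) := by linarith
      positivity
    have haff : HasDerivAt (fun x => G f / (b - f) + c f * (x - (f + b) / 2)) (c f) ((f + b) / 2) := by
      have h1 : HasDerivAt (fun x : ℝ => x - (f + b) / 2) 1 ((f + b) / 2) :=
        (hasDerivAt_id _).sub_const _
      have h2 := (h1.const_mul (c f)).const_add (G f / (b - f))
      simpa using h2
    apply haff.congr_of_eventuallyEq
    have hball : Metric.ball ((f + b) / 2) ((b - f) ^ 2 / (6 * (f + b - 2 * a))) ∈
        nhds ((f + b) / 2) := Metric.ball_mem_nhds _ hδ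
    filter_upwards [hball] with x hx
    have hdist : |x - (f + b) / 2| < (b - f) ^ 2 / (6 * (f + b - 2 * a)) := by
      simpa [Real.dist_eq] using hx
    have := hkey f hf (x - (f + b) / 2) hdist
    rw [add_sub_cancel] at this
    exact this
  -- relation R1
  have hR1 : ∀ f ∈ Set.Ioo a b, c f * (b - f) ^ 2 = 2 * (G f - E f * (b - f)) := by
    intro f hf
    have hr : b - f ≠ 0 := sub_ne_zero.2 hf.2.ne'
    have hF1 : HasDerivAt (fun u => E ((u + b) / 2)) (c f * (1 / 2)) f := by
      have hin : HasDerivAt (fun u : ℝ => (u + b) / 2) (1 / 2) f := by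
        simpa using ((hasDerivAt_id f).add_const b).div_const 2
      have := (hEd f ⟨hf.1.le, hf.2⟩).comp f hin
      exact this
    have hF2 : HasDerivAt (fun u => G u / (b - u))
        ((-(E f) * (b - f) - G f * (0 - 1)) / (b - f) ^ 2) f :=
      (hGderiv f).div ((hasDerivAt_const f b).sub (hasDerivAt_id f)) hr
    have hev : (fun u => E ((u + b) / 2)) =ᶠ[nhds f] fun u => G u / (b - u) := by
      filter_upwards [Ioo_mem_nhds hf.1 hf.2] with u hu
      have h1 := hconstId u ⟨hu.1.le, hu.2⟩
      have hru : b - u ≠ 0 := sub_ne_zero.2 hu.2.ne'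
      field_simp
      linarith [h1]
    have huniq := hF1.unique (hF2.congr_of_eventuallyEq hev)
    field_simp at huniq
    nlinarith [huniq]
  -- c has zero derivative
  have hcder : ∀ f ∈ Set.Ioo a b, HasDerivAt c 0 f := by
    intro f hf
    have hr : b - f ≠ 0 := sub_ne_zero.2 hf.2.ne'
    have hnum : HasDerivAt (fun u => 12 * (A u - (u + b) / 2 * G u))
        (12 * (-(f * E f) - ((1 / 2) * G f + (f + b) / 2 * (-(E f))))) f := by
      have hμ : HasDerivAt (fun u : ℝ => (u + b) / 2) (1 / 2) f := by
        simpa using ((hasDerivAt_id f).add_const b).div_const 2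
      exact (((hAderiv f).sub (hμ.mul (hGderiv f))).const_mul 12)
    have hden : HasDerivAt (fun u : ℝ => (b - u) ^ 3) (3 * (b - f) ^ 2 * (0 - 1)) f := by
      have h1 : HasDerivAt (fun u : ℝ => b - u) (0 - 1) f :=
        (hasDerivAt_const f b).sub (hasDerivAt_id f)
      exact h1.pow 3
    have hdiv := hnum.div hden (pow_ne_zero 3 hr)
    have hcD : HasDerivAt c
        ((12 * (-(f * E f) - (1 / 2 * G f + (f + b) / 2 * -(E f))) * (b - f) ^ 3 -
          12 * (A f - (f + b) / 2 * G f) * (3 * (b - f) ^ 2 * (0 - 1))) / ((b - f) ^ 3) ^ 2) f := by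
      rw [hcdef]
      exact hdiv
    have hval : (12 * (-(f * E f) - (1 / 2 * G f + (f + b) / 2 * -(E f))) * (b - f) ^ 3 -
          12 * (A f - (f + b) / 2 * G f) * (3 * (b - f) ^ 2 * (0 - 1))) / ((b - f) ^ 3) ^ 2 = 0 := by
      have h1 := hR1 f hf
      rw [hcdef] at h1
      simp only at h1
      rw [div_eq_iff (by positivity : ((b - f) ^ 3) ^ 2 ≠ 0)]
      field_simp at h1
      ring_nf
      ring_nf at h1
      linear_combination (3 / 2 * (b - f) ^ 2) * h1
    rw [hval] at hcD
    exact hcD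
  -- generic constancy helper
  have hconst_of : ∀ F : ℝ → ℝ, (∀ t ∈ Set.Ioo a b, HasDerivAt F 0 t) →
      ∀ x ∈ Set.Ioo a b, ∀ y ∈ Set.Ioo a b, F x = F y := by
    intro F hF
    have key : ∀ u v : ℝ, u ∈ Set.Ioo a b → v ∈ Set.Ioo a b → u ≤ v → F v = F u := by
      intro u v hu hv huv
      refine constant_of_has_deriv_right_zero (f := F) (a := u) (b := v) ?_ ?_ v ⟨huv, le_refl v⟩
      · intro t ht
        exact (hF t ⟨lt_of_lt_of_le hu.1 ht.1, lt_of_le_of_lt ht.2 hv.2⟩).continuousAt.continuousWithinAt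
      · intro t ht
        exact (hF t ⟨lt_of_lt_of_le hu.1 ht.1, lt_trans ht.2 hv.2⟩).hasDerivWithinAt
    intro x hx y hy
    rcases le_total x y with hxy | hxy
    · exact (key x y hx hy hxy).symm
    · exact key y x hy hx hxy
  have hmid : (a + b) / 2 ∈ Set.Ioo a b := ⟨by linarith, by linarith⟩
  set c₁ : ℝ := c ((a + b) / 2) with hc₁def
  have hc_const : ∀ f ∈ Set.Ioo a b, c f = c₁ := fun f hf => hconst_of c hcder f hf _ hmid
  -- E in terms of G
  have hEf : ∀ f ∈ Set.Ioo a b, E f = G f / (b - f) - c₁ * (b - f) / 2 := by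
    intro f hf
    have hr : b - f ≠ 0 := sub_ne_zero.2 hf.2.ne'
    have h1 := hR1 f hf
    rw [hc_const f hf] at h1
    field_simp
    nlinarith [h1]
  -- the shifted quotient is constant
  set F₂ : ℝ → ℝ := fun f => G f / (b - f) - c₁ * f / 2 with hF₂def
  have hF₂der : ∀ f ∈ Set.Ioo a b, HasDerivAt F₂ 0 f := by
    intro f hf
    have hr : b - f ≠ 0 := sub_ne_zero.2 hf.2.ne'
    have h1 : HasDerivAt (fun u => G u / (b - u))
        ((-(E f) * (b - f) - G f * (0 - 1)) / (b - f) ^ 2) f :=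
      (hGderiv f).div ((hasDerivAt_const f b).sub (hasDerivAt_id f)) hr
    have h2 : HasDerivAt (fun u : ℝ => c₁ * u / 2) (c₁ / 2) f := by
      simpa using ((hasDerivAt_id f).const_mul c₁).div_const 2
    have h3 : HasDerivAt F₂
        ((-(E f) * (b - f) - G f * (0 - 1)) / (b - f) ^ 2 - c₁ / 2) f := by
      rw [hF₂def]
      exact h1.sub h2
    have hval : (-(E f) * (b - f) - G f * (0 - 1)) / (b - f) ^ 2 - c₁ / 2 = 0 := by
      have h4 := hEf f hf
      field_simp at h4 ⊢
      nlinarith [h4]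
    rw [hval] at h3
    exact h3
  set κ : ℝ := F₂ ((a + b) / 2) with hκdef
  have hF₂const : ∀ f ∈ Set.Ioo a b, F₂ f = κ := fun f hf => hconst_of F₂ hF₂der f hf _ hmid
  set c₂ : ℝ := κ - c₁ * b / 2 with hc₂def
  have hEquals : ∀ f ∈ Set.Ioo a b, E f = c₁ * f + c₂ := by
    intro f hf
    have h1 := hEf f hf
    have h2 := hF₂const f hf
    simp only [hF₂def] at h2
    rw [hc₂def]
    linarith [h1, h2]
  refine ⟨c₁, c₂, ?_⟩
  intro x hx
  rw [← hEeq x hx]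
  have hclosed : IsClosed {x : ℝ | E x = c₁ * x + c₂} :=
    isClosed_eq hEcont ((continuous_const.mul continuous_id).add continuous_const)
  have hsub : Set.Icc a b ⊆ {x : ℝ | E x = c₁ * x + c₂} := by
    rw [← closure_Ioo hab.ne]
    exact hclosed.closure_subset_iff.2 fun t ht => hEquals t ht
  exact hsub hx
end

section
/- Let C be an (n+2) × (n+2) real matrix such that for each column j ≤ n+1, all entries strictly below the diagonal in column j equal aⱼ, the diagonal entry is bⱼ, and aⱼ ≠ bⱼ. Then rank(C) ≥ n+1. -/
theorem stmt14 (n : ℕ) (C : Matrix (Fin (n + 2)) (Fin (n + 2)) ℝ)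
    (a b : Fin (n + 2) → ℝ)
    (hlow : ∀ i j : Fin (n + 2), (j : ℕ) < n + 1 → j < i → C i j = a j)
    (hdiag : ∀ j : Fin (n + 2), (j : ℕ) < n + 1 → C j j = b j)
    (hne : ∀ j : Fin (n + 2), (j : ℕ) < n + 1 → a j ≠ b j) :
    n + 1 ≤ C.rank := by
  classical
  set E : Matrix (Fin (n + 1)) (Fin (n + 2)) ℝ :=
    fun j i => if i = j.castSucc then 1 else if i = j.succ then -1 else 0 with hE
  set F : Matrix (Fin (n + 2)) (Fin (n + 1)) ℝ :=
    fun i k => if i = k.castSucc then 1 else 0 with hF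
  set D : Matrix (Fin (n + 1)) (Fin (n + 1)) ℝ := E * C * F with hD
  have hDentry : ∀ j k : Fin (n + 1),
      D j k = C j.castSucc k.castSucc - C j.succ k.castSucc := by
    intro j k
    have hne' : (j.castSucc : Fin (n + 2)) ≠ j.succ := by
      simp [Fin.ext_iff]
    simp only [hD, Matrix.mul_apply]
    simp only [hE, hF]
    rw [Finset.sum_eq_single k.castSucc]
    · simp only [if_pos rfl, mul_one]
      rw [Finset.sum_eq_add_of_mem j.castSucc j.succ (Finset.mem_univ _)
        (Finset.mem_univ _) hne']
      · simp [hne'.symm]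
        ring
      · intro c _ hc
        rcases hc with ⟨h1, h2⟩
        simp [h1, h2]
    · intro c _ hc
      simp [hc]
    · simp
  have hjk : ∀ j : Fin (n + 1), ((j.castSucc : Fin (n + 2)) : ℕ) < n + 1 := by
    intro j; simp only [Fin.coe_castSucc]; exact j.isLt
  have htri : D.BlockTriangular id := by
    intro j k hjk'
    have hk : (k : ℕ) < (j : ℕ) := hjk'
    rw [hDentry]
    rw [hlow j.castSucc k.castSucc (hjk k) (by simp only [Fin.lt_def, Fin.coe_castSucc]; exact hk),
        hlow j.succ k.castSucc (hjk k)
          (by simp only [Fin.lt_def, Fin.coe_castSucc, Fin.val_succ]; omega)]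
    ring
  have hdiagD : ∀ j : Fin (n + 1), D j j ≠ 0 := by
    intro j
    rw [hDentry]
    rw [hdiag j.castSucc (hjk j),
        hlow j.succ j.castSucc (hjk j) (by simp only [Fin.lt_def, Fin.coe_castSucc, Fin.val_succ]; omega)]
    have := hne j.castSucc (hjk j)
    intro h
    apply this
    linarith [sub_eq_zero.mp h]
  have hdet : D.det ≠ 0 := by
    rw [Matrix.det_of_upperTriangular htri]
    exact Finset.prod_ne_zero_iff.mpr fun j _ => hdiagD j
  have hrankD : D.rank = n + 1 := by
    have : IsUnit D := by
      rw [Matrix.isUnit_iff_isUnit_det]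
      exact isUnit_iff_ne_zero.mpr hdet
    simpa using Matrix.rank_of_isUnit D this
  calc n + 1 = D.rank := hrankD.symm
    _ ≤ (E * C).rank := Matrix.rank_mul_le_left _ _
    _ ≤ C.rank := Matrix.rank_mul_le_right _ _
end
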